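/- arXiv:2102.03004 — 3 statements merged into one kernel-verified Lean document; each statement's English description precedes it below -/
import Mathlib

section
/- Fix q ∈ (1,2). For every θ ∈ (0,1], the equation e^{−q x} = 1 − q x / (1 + (q−1)θ) has a positive real root, its set of positive roots is bounded and attains a maximum φ(θ), and this largest positive root satisfies φ(θ) ≤ θ. Equivalently, the drift function f(θ) = θ − φ(θ) is non-negative on (0,1]. -/
set_option maxHeartbeats 1000000

open Real Set Filter Topology

/-- For `q ∈ (1,2)` and `θ ∈ (0,1]`, the equation
`e^{−qx} = 1 − qx/(1+(q−1)θ)` has a positive root, its set of positive roots is bounded and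
attains a maximum `φ(θ)`, and `φ(θ) ≤ θ`; i.e. the drift `f(θ) = θ − φ(θ)` is non-negative. -/
theorem drift_function_nonneg (q : ℝ) (hq1 : 1 < q) (hq2 : q < 2)
    (θ : ℝ) (hθ0 : 0 < θ) (hθ1 : θ ≤ 1) :
    (∃ x : ℝ, 0 < x ∧ Real.exp (-(q * x)) = 1 - q * x / (1 + (q - 1) * θ)) ∧
    BddAbove {x : ℝ | 0 < x ∧ Real.exp (-(q * x)) = 1 - q * x / (1 + (q - 1) * θ)} ∧
    ∃ φ : ℝ,
      IsGreatest {x : ℝ | 0 < x ∧ Real.exp (-(q * x)) = 1 - q * x / (1 + (q - 1) * θ)} φ ∧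
      φ ≤ θ := by
  set a : ℝ := 1 + (q - 1) * θ with ha_def
  have hq0 : (0:ℝ) < q := by linarith
  have ha1 : 1 < a := by nlinarith
  have ha0 : (0:ℝ) < a := by linarith
  set g : ℝ → ℝ := fun x => Real.exp (-(q * x)) - (1 - q * x / a) with hg_def
  have hg_deriv : ∀ x : ℝ, HasDerivAt g (-q * Real.exp (-(q * x)) + q / a) x := by
    intro x
    have h1 : HasDerivAt (fun x : ℝ => Real.exp (-(q * x))) (-q * Real.exp (-(q*x))) x := by
      have := (Real.hasDerivAt_exp (-(q*x))).comp x (((hasDerivAt_id x).const_mul q).neg)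
      exact this.congr_deriv (by ring)
    have h2 : HasDerivAt (fun x : ℝ => 1 - q * x / a) (-(q / a)) x := by
      have := (hasDerivAt_const x (1:ℝ)).sub (((hasDerivAt_id x).const_mul q).div_const a)
      exact this.congr_deriv (by ring)
    have := h1.sub h2
    exact this.congr_deriv (by ring)
  have hg_cont : Continuous g := by
    apply Continuous.sub
    · exact Real.continuous_exp.comp (by continuity)
    · continuity
  have hg0 : g 0 = 0 := by simp [hg_def]
  -- Step 1: g θ > 0
  have hgθ : 0 < g θ := by
    -- via F t = exp(q t)(1-t) - 1 - (q-1) t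
    set F : ℝ → ℝ := fun t => Real.exp (q*t) * (1 - t) - 1 - (q-1)*t with hF_def
    set F1 : ℝ → ℝ := fun t => Real.exp (q*t) * (q*(1-t) - 1) - (q-1) with hF1_def
    have hF : ∀ t, HasDerivAt F (F1 t) t := by
      intro t
      have he : HasDerivAt (fun t : ℝ => Real.exp (q*t)) (q * Real.exp (q*t)) t := by
        have := (Real.hasDerivAt_exp (q*t)).comp t ((hasDerivAt_id t).const_mul q)
        exact this.congr_deriv (by ring)
      have := ((he.mul ((hasDerivAt_const t (1:ℝ)).sub (hasDerivAt_id t))).sub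
        (hasDerivAt_const t (1:ℝ))).sub ((hasDerivAt_id t).const_mul (q-1))
      simp only [id_eq] at this
      exact this.congr_deriv (by simp <;> ring)
    have hF1 : ∀ t, HasDerivAt F1 (q * Real.exp (q*t) * (q*(1-t) - 2)) t := by
      intro t
      have he : HasDerivAt (fun t : ℝ => Real.exp (q*t)) (q * Real.exp (q*t)) t := by
        have := (Real.hasDerivAt_exp (q*t)).comp t ((hasDerivAt_id t).const_mul q)
        exact this.congr_deriv (by ring)
      have := (he.mul (((hasDerivAt_const t (q:ℝ)).mul ((hasDerivAt_const t (1:ℝ)).sub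
        (hasDerivAt_id t))).sub (hasDerivAt_const t (1:ℝ)))).sub (hasDerivAt_const t (q-1))
      simp only [Pi.sub_apply, Pi.mul_apply, id_eq] at this
      exact this.congr_deriv (by simp <;> ring)
    have hF1anti : StrictAntiOn F1 (Icc 0 1) := by
      apply strictAntiOn_of_deriv_neg (convex_Icc 0 1)
      · exact Continuous.continuousOn (by
          apply Continuous.sub _ continuous_const
          exact (Real.continuous_exp.comp (by continuity)).mul (by continuity))
      · intro t ht
        rw [interior_Icc] at ht
        rw [(hF1 t).deriv]
        have hep := Real.exp_pos (q*t)
        have h2 : q*(1-t) - 2 < 0 := by nlinarith [ht.1, ht.2]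
        exact mul_neg_of_pos_of_neg (mul_pos hq0 hep) h2
    have hF1neg : ∀ t ∈ Icc (0:ℝ) 1, 0 < t → F1 t < 0 := by
      intro t ht ht0
      have : F1 t < F1 0 := hF1anti (by constructor <;> norm_num) ht ht0
      simpa [hF1_def] using this
    have hFanti : StrictAntiOn F (Icc 0 1) := by
      apply strictAntiOn_of_deriv_neg (convex_Icc 0 1)
      · exact Continuous.continuousOn (by
          apply Continuous.sub
          apply Continuous.sub _ continuous_const
          exact (Real.continuous_exp.comp (by continuity)).mul (by continuity)
          continuity)
      · intro t ht
        rw [interior_Icc] at ht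
        rw [(hF t).deriv]
        exact hF1neg t ⟨le_of_lt ht.1, le_of_lt ht.2⟩ ht.1
    have hFθ : F θ < 0 := by
      have : F θ < F 0 := hFanti (by constructor <;> norm_num) ⟨le_of_lt hθ0, hθ1⟩ hθ0
      simpa [hF_def] using this
    -- F θ < 0 means exp(qθ)(1-θ) < a
    have hkey : Real.exp (q*θ) * (1 - θ) < a := by
      simp only [hF_def] at hFθ; linarith
    have hE : (0:ℝ) < Real.exp (q*θ) := Real.exp_pos _
    have h1θ : 1 - q * θ / a = (1 - θ) / a := by
      field_simp; ring
    have hexp : Real.exp (-(q*θ)) = (Real.exp (q*θ))⁻¹ := by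
      rw [← Real.exp_neg]
    have : (1 - θ) / a < (Real.exp (q*θ))⁻¹ := by
      rw [← one_div, div_lt_div_iff₀ ha0 hE]
      nlinarith [hkey]
    simp only [hg_def, h1θ, hexp]
    linarith
  -- Step 2: g is positive beyond θ
  have hgpos : ∀ x : ℝ, θ < x → 0 < g x := by
    have hmono : StrictMonoOn g (Ici θ) := by
      apply strictMonoOn_of_deriv_pos (convex_Ici θ)
      · exact hg_cont.continuousOn
      · intro x hx
        rw [interior_Ici] at hx
        rw [(hg_deriv x).deriv]
        have hlog : Real.log a < q * x := by
          have h1 : Real.log a ≤ a - 1 := Real.log_le_sub_one_of_pos ha0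
          have h2 : a - 1 = (q-1)*θ := by rw [ha_def]; ring
          have : θ < x := hx
          nlinarith
        have hax : a < Real.exp (q * x) := by
          calc a = Real.exp (Real.log a) := (Real.exp_log ha0).symm
          _ < Real.exp (q*x) := Real.exp_lt_exp.2 hlog
        have hinv : Real.exp (-(q*x)) < 1 / a := by
          rw [Real.exp_neg, one_div]
          exact (inv_lt_inv₀ (Real.exp_pos _) ha0).2 hax
        have h3 := mul_lt_mul_of_pos_left hinv hq0
        rw [mul_one_div] at h3
        linarith
    intro x hx
    have := hmono (le_refl θ : θ ∈ Ici θ) (le_of_lt hx : θ ≤ x) hx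
    linarith
  -- roots are ≤ θ
  have hroot_le : ∀ x : ℝ, 0 < x → Real.exp (-(q * x)) = 1 - q * x / a → x ≤ θ := by
    intro x hx hgx
    by_contra h
    push_neg at h
    have := hgpos x h
    have : g x = 0 := by simp [hg_def, hgx]
    linarith [hgpos x h]
  -- Step 3: existence of a root
  have hd0 : HasDerivAt g (-q * 1 + q / a) 0 := by simpa using hg_deriv 0
  have hdneg : -q * 1 + q / a < 0 := by
    have : q / a < q := by
      rw [div_lt_iff₀ ha0]; nlinarith
    linarith
  have hslope := hasDerivAt_iff_tendsto_slope.1 hd0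
  have hev : ∀ᶠ x in 𝓝[>] (0:ℝ), slope g 0 x < 0 := by
    have h1 : Tendsto (slope g 0) (𝓝[>] 0) (𝓝 (-q * 1 + q / a)) :=
      hslope.mono_left (nhdsWithin_mono 0 (fun x hx => ne_of_gt hx))
    exact h1.eventually_lt_const hdneg
  have hev2 : ∀ᶠ x in 𝓝[>] (0:ℝ), x ∈ Ioo (0:ℝ) θ :=
    eventually_of_mem (Ioo_mem_nhdsGT hθ0) (fun x hx => hx)
  obtain ⟨x₁, hs1, hx₁⟩ := (hev.and hev2).exists
  have hgx₁ : g x₁ < 0 := by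
    have hx0 : (0:ℝ) < x₁ := hx₁.1
    rw [slope_def_field, hg0] at hs1
    have hs1' : g x₁ / x₁ < 0 := by
      have hx : x₁ - 0 = x₁ := by ring
      rw [hx, sub_zero] at hs1
      exact hs1
    have := mul_neg_of_neg_of_pos hs1' hx0
    rwa [div_mul_cancel₀ _ (ne_of_gt hx0)] at this
  have hroot : ∃ c, c ∈ Icc x₁ θ ∧ g c = 0 := by
    have hsub : Icc (g x₁) (g θ) ⊆ g '' Icc x₁ θ :=
      intermediate_value_Icc (le_of_lt hx₁.2) hg_cont.continuousOn
    have h0mem : (0:ℝ) ∈ Icc (g x₁) (g θ) := ⟨le_of_lt hgx₁, le_of_lt hgθ⟩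
    obtain ⟨c, hc, hgc⟩ := hsub h0mem
    exact ⟨c, hc, hgc⟩
  obtain ⟨c, hc, hgc⟩ := hroot
  have hc0 : 0 < c := lt_of_lt_of_le hx₁.1 hc.1
  have hceq : Real.exp (-(q * c)) = 1 - q * c / a := by
    have := hgc; simp only [hg_def] at this; linarith [sub_eq_zero.1 this]
  have hcS : c ∈ {x : ℝ | 0 < x ∧ Real.exp (-(q * x)) = 1 - q * x / a} := ⟨hc0, hceq⟩
  have hbdd : BddAbove {x : ℝ | 0 < x ∧ Real.exp (-(q * x)) = 1 - q * x / a} :=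
    ⟨θ, fun x hx => hroot_le x hx.1 hx.2⟩
  have hne : Set.Nonempty {x : ℝ | 0 < x ∧ Real.exp (-(q * x)) = 1 - q * x / a} := ⟨c, hcS⟩
  refine ⟨⟨c, hc0, hceq⟩, hbdd, ?_⟩
  set S := {x : ℝ | 0 < x ∧ Real.exp (-(q * x)) = 1 - q * x / a} with hS_def
  set φ := sSup S with hφ_def
  have hφc : c ≤ φ := le_csSup hbdd hcS
  have hφ0 : 0 < φ := lt_of_lt_of_le hc0 hφc
  have hclosed : IsClosed {x : ℝ | g x = 0} := isClosed_eq hg_cont continuous_const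
  have hφS : φ ∈ S := by
    have h1 : φ ∈ closure S := csSup_mem_closure hne hbdd
    have h2 : S ⊆ {x : ℝ | g x = 0} := by
      intro x hx
      simp only [mem_setOf_eq, hg_def]
      rw [hx.2]; ring
    have h3 : φ ∈ {x : ℝ | g x = 0} := by
      have := closure_mono h2 h1
      rwa [hclosed.closure_eq] at this
    refine ⟨hφ0, ?_⟩
    simp only [mem_setOf_eq, hg_def] at h3
    linarith [sub_eq_zero.1 h3]
  refine ⟨φ, ⟨hφS, fun x hx => le_csSup hbdd hx⟩, hroot_le φ hφS.1 hφS.2⟩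
end

section
/- Let B > 1 be a constant such that x ≥ (log x)^{48} for all x ≥ B^6, let δ > 0, and for n ∈ ℕ define g_0(n) = δ n^{1/3} and g_{i+1}(n) = B (log g_i(n))^8 for i ≥ 0; let K = K(n) be the least integer with g_K(n) ≤ B^6. Then for every n with g_0(n) > B^6 and every integer j with 0 ≤ j < K: (i) for every real c with 0 < c ≤ 4 log B, ∏_{i=0}^{j} (1 − c/log g_i(n)) ≥ 1 − 1.5 c / log g_j(n); and (ii) ∑_{i=0}^{j} 1/log g_i(n) ≤ 1.5 / log g_j(n). -/
/-- Weierstrass product inequality. -/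
lemma weier_prod_one_sub (a : ℕ → ℝ) (m : ℕ)
    (h0 : ∀ i ∈ Finset.range m, 0 ≤ a i) (h1 : ∀ i ∈ Finset.range m, a i ≤ 1) :
    1 - ∑ i ∈ Finset.range m, a i ≤ ∏ i ∈ Finset.range m, (1 - a i) := by
  induction m with
  | zero => simp
  | succ m ih =>
    have hm : m ∈ Finset.range (m + 1) := Finset.self_mem_range_succ m
    have h0' : ∀ i ∈ Finset.range m, 0 ≤ a i := fun i hi =>
      h0 i (Finset.mem_range.mpr (Nat.lt_succ_of_lt (Finset.mem_range.mp hi)))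
    have h1' : ∀ i ∈ Finset.range m, a i ≤ 1 := fun i hi =>
      h1 i (Finset.mem_range.mpr (Nat.lt_succ_of_lt (Finset.mem_range.mp hi)))
    have hS : 0 ≤ ∑ i ∈ Finset.range m, a i := Finset.sum_nonneg h0'
    have key : (1 - ∑ i ∈ Finset.range m, a i) * (1 - a m) ≤
        (∏ i ∈ Finset.range m, (1 - a i)) * (1 - a m) :=
      mul_le_mul_of_nonneg_right (ih h0' h1') (by linarith [h1 m hm])
    rw [Finset.sum_range_succ, Finset.prod_range_succ]
    nlinarith [h0 m hm]

/-- Elementary estimates for the recursively defined sequence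
`g_0(n) = δ n^{1/3}`, `g_{i+1}(n) = B (log g_i(n))^8`, where `B > 1` satisfies
`x ≥ (log x)^{48}` for all `x ≥ B^6`, and `K` is the least index with `g_K(n) ≤ B^6`. -/
theorem g_sequence_estimates (B δ : ℝ) (hB : 1 < B)
    (hBx : ∀ x : ℝ, B ^ 6 ≤ x → Real.log x ^ 48 ≤ x) (hδ : 0 < δ)
    (n : ℕ) (g : ℕ → ℝ)
    (hg0 : g 0 = δ * (n : ℝ) ^ ((1 : ℝ) / 3))
    (hgrec : ∀ i : ℕ, g (i + 1) = B * Real.log (g i) ^ 8)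
    (K : ℕ) (hK : g K ≤ B ^ 6) (hKleast : ∀ i : ℕ, i < K → B ^ 6 < g i)
    (hstart : B ^ 6 < g 0) :
    ∀ j : ℕ, j < K →
      (∀ c : ℝ, 0 < c → c ≤ 4 * Real.log B →
        1 - 1.5 * c / Real.log (g j) ≤
          ∏ i ∈ Finset.range (j + 1), (1 - c / Real.log (g i))) ∧
      (∑ i ∈ Finset.range (j + 1), 1 / Real.log (g i)) ≤ 1.5 / Real.log (g j) := by
  have hlogB : 0 < Real.log B := Real.log_pos hB
  have hBpos : 0 < B := lt_trans one_pos hB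
  set L : ℕ → ℝ := fun i => Real.log (g i) with hLdef
  have hL : ∀ i, i < K → 6 * Real.log B < L i := by
    intro i hi
    have h1 : Real.log (B ^ 6) < Real.log (g i) :=
      Real.log_lt_log (pow_pos hBpos 6) (hKleast i hi)
    rw [Real.log_pow] at h1
    simpa using h1
  have hLpos : ∀ i, i < K → 0 < L i := fun i hi =>
    lt_trans (by positivity) (hL i hi)
  have hstep : ∀ i, i + 1 < K → 5 * L (i + 1) ≤ L i := by
    intro i hi
    have hiK : i < K := Nat.lt_of_succ_lt hi
    have hLipos : 0 < L i := hLpos i hiK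
    have h48 : 48 * Real.log (L i) ≤ L i := by
      have h1 : (L i) ^ 48 ≤ g i := hBx _ (le_of_lt (hKleast i hiK))
      have h2 : Real.log ((L i) ^ 48) ≤ Real.log (g i) :=
        Real.log_le_log (by positivity) h1
      rw [Real.log_pow] at h2
      have : ((48 : ℕ) : ℝ) * Real.log (L i) ≤ L i := h2
      norm_num at this
      linarith
    have hrec : L (i + 1) = Real.log B + 8 * Real.log (L i) := by
      show Real.log (g (i + 1)) = _
      rw [hgrec i, Real.log_mul (ne_of_gt hBpos) (pow_ne_zero 8 (ne_of_gt hLipos)),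
        Real.log_pow]
      norm_num
    have h6 : 6 * Real.log B < L (i + 1) := hL (i + 1) hi
    nlinarith
  have hdecay : ∀ d i, i + d < K → 5 ^ d * L (i + d) ≤ L i := by
    intro d
    induction d with
    | zero => intro i hi; simp
    | succ d ih =>
      intro i hi
      have h1 : i + 1 + d < K := by omega
      have h2 : 5 ^ d * L (i + 1 + d) ≤ L (i + 1) := ih (i + 1) h1
      have h3 : 5 * L (i + 1) ≤ L i := hstep i (by omega)
      have he : i + (d + 1) = i + 1 + d := by omega
      rw [he]
      calc 5 ^ (d + 1) * L (i + 1 + d) = 5 * (5 ^ d * L (i + 1 + d)) := by ring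
        _ ≤ 5 * L (i + 1) := by linarith
        _ ≤ L i := h3
  intro j hj
  have hLjpos : 0 < L j := hLpos j hj
  have hinv : ∀ i ∈ Finset.range (j + 1), 1 / L i ≤ (1 / 5 : ℝ) ^ (j - i) * (1 / L j) := by
    intro i hi
    have hij : i ≤ j := Nat.lt_succ_iff.mp (Finset.mem_range.mp hi)
    have h1 : 5 ^ (j - i) * L j ≤ L i := by
      have := hdecay (j - i) i (by omega)
      rwa [show i + (j - i) = j from by omega] at this
    have hLipos : 0 < L i := hLpos i (lt_of_le_of_lt hij hj)
    have h5 : (0 : ℝ) < 5 ^ (j - i) := by positivity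
    rw [one_div_pow, one_div_mul_one_div]
    rw [div_le_div_iff₀ hLipos (by positivity)]
    linarith
  have hgeom : ∑ i ∈ Finset.range (j + 1), (1 / 5 : ℝ) ^ (j - i) ≤ 5 / 4 := by
    have hre : ∑ i ∈ Finset.range (j + 1), (1 / 5 : ℝ) ^ (j - i)
        = ∑ k ∈ Finset.range (j + 1), (1 / 5 : ℝ) ^ k := by
      rw [← Finset.sum_range_reflect]
      apply Finset.sum_congr rfl
      intro i hi
      simp only [Finset.mem_range] at hi
      congr 1
      omega
    rw [hre, geom_sum_eq (by norm_num : (1 / 5 : ℝ) ≠ 1)]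
    have h5 : (0 : ℝ) ≤ (1 / 5 : ℝ) ^ (j + 1) := by positivity
    rw [div_le_iff_of_neg (by norm_num : (1 / 5 : ℝ) - 1 < 0)]
    linarith
  have hsum : (∑ i ∈ Finset.range (j + 1), 1 / L i) ≤ 1.5 / L j := by
    calc ∑ i ∈ Finset.range (j + 1), 1 / L i
        ≤ ∑ i ∈ Finset.range (j + 1), (1 / 5 : ℝ) ^ (j - i) * (1 / L j) :=
          Finset.sum_le_sum hinv
      _ = (∑ i ∈ Finset.range (j + 1), (1 / 5 : ℝ) ^ (j - i)) * (1 / L j) := by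
          rw [← Finset.sum_mul]
      _ ≤ (5 / 4) * (1 / L j) := by
          apply mul_le_mul_of_nonneg_right hgeom (by positivity)
      _ ≤ 1.5 / L j := by rw [div_eq_mul_one_div 1.5]; nlinarith [one_div_pos.mpr hLjpos]
  refine ⟨fun c hc hc4 => ?_, hsum⟩
  have h0 : ∀ i ∈ Finset.range (j + 1), 0 ≤ c / L i := by
    intro i hi
    have := hLpos i (lt_of_le_of_lt (Nat.lt_succ_iff.mp (Finset.mem_range.mp hi)) hj)
    positivity
  have h1 : ∀ i ∈ Finset.range (j + 1), c / L i ≤ 1 := by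
    intro i hi
    have hiK : i < K := lt_of_le_of_lt (Nat.lt_succ_iff.mp (Finset.mem_range.mp hi)) hj
    have hLi := hL i hiK
    have hLipos := hLpos i hiK
    rw [div_le_one hLipos]
    linarith
  have hW := weier_prod_one_sub (fun i => c / L i) (j + 1) h0 h1
  have hsum2 : ∑ i ∈ Finset.range (j + 1), c / L i ≤ 1.5 * c / L j := by
    have : ∑ i ∈ Finset.range (j + 1), c / L i = c * ∑ i ∈ Finset.range (j + 1), 1 / L i := by
      rw [Finset.mul_sum]; apply Finset.sum_congr rfl; intro i _; ring
    rw [this]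
    calc c * ∑ i ∈ Finset.range (j + 1), 1 / L i ≤ c * (1.5 / L j) :=
          mul_le_mul_of_nonneg_left hsum (le_of_lt hc)
      _ = 1.5 * c / L j := by ring
  calc 1 - 1.5 * c / L j ≤ 1 - ∑ i ∈ Finset.range (j + 1), c / L i := by linarith
    _ ≤ ∏ i ∈ Finset.range (j + 1), (1 - c / L i) := hW
end

section
/- Let A > 0 and let A ≤ c_1, c_2, …, c_n ≤ 4A be positive integers, and let r ∈ (0, 1/2]. Let X_1, …, X_n be independent random variables with P[X_i = c_i] = r, P[X_i = −c_i] = r and P[X_i = 0] = 1 − 2r. Let S_k = Σ_{i=1}^k X_i and M_n = max{S_1, …, S_n}. Then for every real y ≥ 0, P[M_n ≥ y] ≥ 2 P[S_n ≥ y + 8A + 1]. -/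
open scoped BigOperators

attribute [local instance] Classical.propDecidable

noncomputable section

/-- The probability weight of a sign pattern `ε` for the lazy symmetric walk with
`P[X_i = c_i] = P[X_i = -c_i] = r` and `P[X_i = 0] = 1 - 2r`. -/
def signWeight {n : ℕ} (r : ℝ) (ε : Fin n → SignType) : ℝ :=
  ∏ i_ : Fin n, if ε i_ = 0 then 1 - 2 * r else r

/-- The `k`-th partial sum `S_k = Σ_{i < k} ε_i c_i` of the walk. -/
def walkSum {n : ℕ} (c : Fin n → ℕ) (ε : Fin n → SignType) (k : ℕ) : ℤ :=
  ∑ i_ ∈ Finset.univ.filter (fun i_ : Fin n => (i_ : ℕ) < k), (ε i_ : ℤ) * (c i_ : ℤ)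

namespace WalkRefl

variable {n : ℕ}

lemma walkSum_zero (c : Fin n → ℕ) (ε : Fin n → SignType) : walkSum c ε 0 = 0 := by
  simp [walkSum]

lemma walkSum_succ (c : Fin n → ℕ) (ε : Fin n → SignType) (k : ℕ) (hk : k < n) :
    walkSum c ε (k + 1) = walkSum c ε k + (ε ⟨k, hk⟩ : ℤ) * (c ⟨k, hk⟩ : ℤ) := by
  unfold walkSum
  have hins : Finset.univ.filter (fun i : Fin n => (i : ℕ) < k + 1)
      = insert ⟨k, hk⟩ (Finset.univ.filter (fun i : Fin n => (i : ℕ) < k)) := by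
    ext i
    simp [Nat.lt_succ_iff_lt_or_eq, Fin.ext_iff, or_comm]
    omega
  rw [hins, Finset.sum_insert (by simp)]
  ring

lemma walkSum_split (c : Fin n → ℕ) (ε : Fin n → SignType) {a b : ℕ} (hab : a ≤ b) :
    walkSum c ε b = walkSum c ε a +
      ∑ i ∈ Finset.univ.filter (fun i : Fin n => a ≤ (i : ℕ) ∧ (i : ℕ) < b),
        (ε i : ℤ) * (c i : ℤ) := by
  unfold walkSum
  rw [← Finset.sum_filter_add_sum_filter_not
    (Finset.univ.filter (fun i : Fin n => (i : ℕ) < b)) (fun i => (i : ℕ) < a)]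
  congr 1
  · congr 1
    ext i
    simp only [Finset.mem_filter, Finset.mem_univ, true_and]
    omega
  · congr 1
    ext i
    simp only [Finset.mem_filter, Finset.mem_univ, true_and]
    omega

/-- the reflection of `ε` at time `t`. -/
def reflAt (t : ℕ) (ε : Fin n → SignType) : Fin n → SignType :=
  fun i => if (i : ℕ) < t then ε i else -ε i

lemma walkSum_reflAt_le (c : Fin n → ℕ) (ε : Fin n → SignType) (t k : ℕ) (hk : k ≤ t) :
    walkSum c (reflAt t ε) k = walkSum c ε k := by
  unfold walkSum
  apply Finset.sum_congr rfl
  intro i hi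
  simp only [Finset.mem_filter, Finset.mem_univ, true_and] at hi
  have : (i : ℕ) < t := lt_of_lt_of_le hi hk
  simp [reflAt, this]

lemma walkSum_reflAt_ge (c : Fin n → ℕ) (ε : Fin n → SignType) (t k : ℕ) (hk : t ≤ k) :
    walkSum c (reflAt t ε) k = 2 * walkSum c ε t - walkSum c ε k := by
  have h1 := walkSum_split c (reflAt t ε) hk
  have h2 := walkSum_split c ε hk
  have hmid : ∑ i ∈ Finset.univ.filter (fun i : Fin n => t ≤ (i : ℕ) ∧ (i : ℕ) < k),
      ((reflAt t ε) i : ℤ) * (c i : ℤ)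
      = - ∑ i ∈ Finset.univ.filter (fun i : Fin n => t ≤ (i : ℕ) ∧ (i : ℕ) < k),
        (ε i : ℤ) * (c i : ℤ) := by
    rw [← Finset.sum_neg_distrib]
    apply Finset.sum_congr rfl
    intro i hi
    simp only [Finset.mem_filter, Finset.mem_univ, true_and] at hi
    have : ¬ ((i : ℕ) < t) := by omega
    simp [reflAt, this, SignType.coe_neg]
  rw [hmid] at h1
  rw [walkSum_reflAt_le c ε t t le_rfl] at h1
  omega

lemma signWeight_reflAt (r : ℝ) (t : ℕ) (ε : Fin n → SignType) :
    signWeight r (reflAt t ε) = signWeight r ε := by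
  unfold signWeight
  apply Finset.prod_congr rfl
  intro i _
  by_cases h : (i : ℕ) < t
  · simp [reflAt, h]
  · cases h0 : ε i <;> simp [reflAt, h, h0]

lemma signWeight_nonneg {r : ℝ} (hr0 : 0 < r) (hr1 : r ≤ 1 / 2) (ε : Fin n → SignType) :
    0 ≤ signWeight r ε := by
  unfold signWeight
  apply Finset.prod_nonneg
  intro i _
  by_cases h : ε i = 0 <;> simp [h] <;> linarith

lemma signType_coe_le_one (s : SignType) : (s : ℤ) ≤ 1 := by
  cases s <;> simp

end WalkRefl

/-- A reflection-principle estimate for the maximum of a lazy symmetric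
random walk with step sizes in `[A, 4A]`:
`P[M_n ≥ y] ≥ 2 P[S_n ≥ y + 8A + 1]`. -/
theorem walk_maximum_reflection (A : ℝ) (hA : 0 < A) (n : ℕ) (c : Fin n → ℕ)
    (hc : ∀ i_, A ≤ (c i_ : ℝ) ∧ (c i_ : ℝ) ≤ 4 * A)
    (r : ℝ) (hr0 : 0 < r) (hr1 : r ≤ 1 / 2) (y : ℝ) (hy : 0 ≤ y) :
    2 * (∑ ε : Fin n → SignType,
          if y + 8 * A + 1 ≤ ((walkSum c ε n : ℤ) : ℝ) then signWeight r ε else 0) ≤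
      ∑ ε : Fin n → SignType,
        if (∃ k : ℕ, 1 ≤ k ∧ k ≤ n ∧ y ≤ ((walkSum c ε k : ℤ) : ℝ))
        then signWeight r ε else 0 := by
  classical
  open WalkRefl in
  set P : (Fin n → SignType) → Prop :=
    fun ε => ∃ k : ℕ, 1 ≤ k ∧ k ≤ n ∧ y ≤ ((walkSum c ε k : ℤ) : ℝ) with hP
  set Q : (Fin n → SignType) → Prop :=
    fun ε => y + 8 * A + 1 ≤ ((walkSum c ε n : ℤ) : ℝ) with hQ
  -- Q implies P
  have hQP : ∀ ε, Q ε → P ε := by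
    intro ε hq
    simp only [hQ] at hq
    have hn : 1 ≤ n := by
      by_contra hn
      push_neg at hn
      have h0 : walkSum c ε n = 0 := by
        have hn0 : n = 0 := by omega
        subst hn0
        exact WalkRefl.walkSum_zero c ε
      rw [h0] at hq
      push_cast at hq
      linarith
    exact ⟨n, hn, le_rfl, by linarith⟩
  -- the stopping time
  have hstop : ∀ ε (h : P ε), 1 ≤ Nat.find h ∧ Nat.find h ≤ n ∧
      y ≤ ((walkSum c ε (Nat.find h) : ℤ) : ℝ) ∧
      ∀ m, 1 ≤ m → m < Nat.find h → ((walkSum c ε m : ℤ) : ℝ) < y := by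
    intro ε h
    obtain ⟨h1, h2, h3⟩ := Nat.find_spec h
    refine ⟨h1, h2, h3, ?_⟩
    intro m hm1 hm2
    by_contra hcon
    push_neg at hcon
    exact Nat.find_min h hm2 ⟨hm1, le_trans (le_of_lt hm2) h2, hcon⟩
  -- reflection map
  set F : (Fin n → SignType) → (Fin n → SignType) :=
    fun ε => if h : P ε then WalkRefl.reflAt (Nat.find h) ε else ε with hF
  -- key facts for ε with P ε, t := Nat.find h
  -- S'_t = S_t, so P (F ε)
  have hFP : ∀ ε (h : P ε), P (F ε) := by
    intro ε h
    obtain ⟨h1, h2, h3, _⟩ := hstop ε h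
    refine ⟨Nat.find h, h1, h2, ?_⟩
    rw [hF]
    simp only [dif_pos h]
    rw [WalkRefl.walkSum_reflAt_le c ε _ _ le_rfl]
    exact h3
  -- stopping time of F ε equals that of ε
  have hFind : ∀ ε (h : P ε), Nat.find (hFP ε h) = Nat.find h := by
    intro ε h
    obtain ⟨h1, h2, h3, h4⟩ := hstop ε h
    rw [Nat.find_eq_iff]
    constructor
    · refine ⟨h1, h2, ?_⟩
      rw [hF]; simp only [dif_pos h]
      rw [WalkRefl.walkSum_reflAt_le c ε _ _ le_rfl]
      exact h3
    · intro m hm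
      rintro ⟨hm1, hm2, hm3⟩
      rw [hF] at hm3; simp only [dif_pos h] at hm3
      rw [WalkRefl.walkSum_reflAt_le c ε _ _ (le_of_lt hm)] at hm3
      exact absurd hm3 (not_le.mpr (h4 m hm1 hm))
  -- F is an involution on P
  have hFF : ∀ ε, P ε → F (F ε) = ε := by
    intro ε h
    have h' : P (F ε) := hFP ε h
    have hFe : F ε = WalkRefl.reflAt (Nat.find h) ε := dif_pos h
    have hFFe : F (F ε) = WalkRefl.reflAt (Nat.find (hFP ε h)) (F ε) := dif_pos (hFP ε h)
    rw [hFFe, hFind ε h, hFe]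
    funext i
    simp only [WalkRefl.reflAt]
    by_cases hi : (i : ℕ) < Nat.find h <;> simp [hi]
  -- weight preservation
  have hFw : ∀ ε, signWeight r (F ε) = signWeight r ε := by
    intro ε
    rw [hF]
    by_cases h : P ε
    · simp only [dif_pos h]
      exact WalkRefl.signWeight_reflAt r _ ε
    · simp only [dif_neg h]
  -- for ε with Q ε : the reflected final sum is < y + 8A + 1, so ¬ Q (F ε)
  have hFQ : ∀ ε, Q ε → ¬ Q (F ε) := by
    intro ε hq
    have h : P ε := hQP ε hq
    obtain ⟨h1, h2, h3, h4⟩ := hstop ε h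
    set t := Nat.find h with ht
    -- S_{t-1} ≤ y
    have hpred : ((walkSum c ε (t - 1) : ℤ) : ℝ) ≤ y := by
      rcases Nat.lt_or_ge 1 t with hlt | hle
      · exact le_of_lt (h4 (t - 1) (by omega) (by omega))
      · have : t = 1 := le_antisymm hle h1
        rw [this]
        simp [WalkRefl.walkSum_zero]
        exact hy
    -- S_t ≤ S_{t-1} + 4A
    have hstep : ((walkSum c ε t : ℤ) : ℝ) ≤ ((walkSum c ε (t - 1) : ℤ) : ℝ) + 4 * A := by
      have htn : t - 1 < n := by omega
      have hsucc := WalkRefl.walkSum_succ c ε (t - 1) htn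
      have ht1 : t - 1 + 1 = t := by omega
      rw [ht1] at hsucc
      rw [hsucc]
      push_cast
      have hle1 : ((ε ⟨t - 1, htn⟩ : ℤ) : ℝ) ≤ 1 := by
        exact_mod_cast WalkRefl.signType_coe_le_one _
      push_cast at hle1
      have hc0 : (0 : ℝ) ≤ (c ⟨t - 1, htn⟩ : ℝ) := Nat.cast_nonneg _
      have hc4 := (hc ⟨t - 1, htn⟩).2
      nlinarith [mul_le_mul_of_nonneg_right hle1 hc0]
    -- S'_n = 2 S_t - S_n
    have hrefl : walkSum c (F ε) n = 2 * walkSum c ε t - walkSum c ε n := by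
      rw [hF]
      simp only [dif_pos h]
      exact WalkRefl.walkSum_reflAt_ge c ε t n h2
    intro hq'
    simp only [hQ] at hq hq'
    rw [hrefl] at hq'
    push_cast at hq'
    linarith
  -- now the sum manipulation
  rw [show (∑ ε : Fin n → SignType,
      if y + 8 * A + 1 ≤ ((walkSum c ε n : ℤ) : ℝ) then signWeight r ε else 0)
      = ∑ ε ∈ Finset.univ.filter Q, signWeight r ε from (Finset.sum_filter _ _).symm]
  rw [show (∑ ε : Fin n → SignType,
      if (∃ k : ℕ, 1 ≤ k ∧ k ≤ n ∧ y ≤ ((walkSum c ε k : ℤ) : ℝ))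
      then signWeight r ε else 0)
      = ∑ ε ∈ Finset.univ.filter P, signWeight r ε from (Finset.sum_filter _ _).symm]
  set B : Finset (Fin n → SignType) := Finset.univ.filter Q with hB
  set B' : Finset (Fin n → SignType) := B.image F with hB'
  have hmemB : ∀ ε, ε ∈ B ↔ Q ε := by intro ε; simp [hB]
  have hBsub : B ⊆ Finset.univ.filter P := by
    intro ε hε
    rw [hmemB] at hε
    simp [hQP ε hε]
  have hB'sub : B' ⊆ Finset.univ.filter P := by
    intro ε hε
    rw [hB'] at hε
    obtain ⟨ε₀, hε₀, rfl⟩ := Finset.mem_image.mp hε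
    rw [hmemB] at hε₀
    simp [hFP ε₀ (hQP ε₀ hε₀)]
  have hdisj : Disjoint B B' := by
    rw [Finset.disjoint_right]
    intro ε hε hεB
    rw [hB'] at hε
    obtain ⟨ε₀, hε₀, rfl⟩ := Finset.mem_image.mp hε
    rw [hmemB] at hε₀ hεB
    exact hFQ ε₀ hε₀ hεB
  have hsumB' : ∑ ε ∈ B', signWeight r ε = ∑ ε ∈ B, signWeight r ε := by
    rw [hB', Finset.sum_image]
    · exact Finset.sum_congr rfl fun ε _ => hFw ε
    · intro a ha b hb hab
      rw [Finset.mem_coe, hmemB] at ha hb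
      have := congrArg F hab
      rwa [hFF a (hQP a ha), hFF b (hQP b hb)] at this
  have hnonneg : ∀ ε ∈ Finset.univ.filter P, 0 ≤ signWeight r ε :=
    fun ε _ => WalkRefl.signWeight_nonneg hr0 hr1 ε
  calc 2 * ∑ ε ∈ B, signWeight r ε
      = ∑ ε ∈ B, signWeight r ε + ∑ ε ∈ B', signWeight r ε := by rw [hsumB']; ring
    _ = ∑ ε ∈ B ∪ B', signWeight r ε := (Finset.sum_union hdisj).symm
    _ ≤ ∑ ε ∈ Finset.univ.filter P, signWeight r ε := by
        apply Finset.sum_le_sum_of_subset_of_nonneg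
        · exact Finset.union_subset hBsub hB'sub
        · intro ε hε _
          exact WalkRefl.signWeight_nonneg hr0 hr1 ε

end
end
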